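/- Let k be a field, C a small category, and X, Y : C ⥤ Vect_k functors such that X(C) and Y(C) are finite dimensional for every object C of C. Then the bifunctor Cᵒᵖ × C → Vect_k sending (A,B) to Hom_k(X(A), Y(B)) has a coend Hom̌(X,Y), and the linear dual Hom̌(X,Y)* is isomorphic to the end Hom(X,Y) (the space of families u = {u_C ∈ Hom_k(X(C), Y(C))} with Y(f) ∘ u_A = u_B ∘ X(f) for all f : A → B); the isomorphism is induced by the pairing ⟨u, [h]⟩ = Tr(u_C ∘ h) for h ∈ Hom_k(Y(C), X(C)). -/

import Mathlib

open CategoryTheory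
open scoped Classical DirectSum

universe u

noncomputable section

variable (k : Type u) [Field k] (C : Type u) [SmallCategory C]
variable (X Y : C ⥤ ModuleCat.{u} k)

/-- The subspace of `∏ C, Hom_k(X(C), Y(C))` consisting of the families `u = {u_C}` such
that `Y(f) ∘ u_A = u_B ∘ X(f)` for every morphism `f : A ⟶ B` of `C`; this is the end
`Hom(X, Y)` of the bifunctor `(A, B) ↦ Hom_k(X(A), Y(B))`. -/
def homEnd : Submodule k (∀ c : C, X.obj c →ₗ[k] Y.obj c) where
  carrier := { u | ∀ (A B : C) (f : A ⟶ B) (x : X.obj A), Y.map f (u A x) = u B (X.map f x) }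
  add_mem' := by
    intro u v hu hv A B f x
    simp only [Pi.add_apply, LinearMap.add_apply, map_add, hu A B f x, hv A B f x]
  zero_mem' := by
    intro A B f x
    simp
  smul_mem' := by
    intro c u hu A B f x
    simp only [Pi.smul_apply, LinearMap.smul_apply, map_smul, hu A B f x]

/-- The direct sum `⊕_{C} Hom_k(Y(C), X(C))`. -/
abbrev HomSum := ⨁ (c : C), (Y.obj c →ₗ[k] X.obj c)

/-- The subspace of `⊕_{C} Hom_k(Y(C), X(C))` spanned by all elements
`(h ∘ Y(f))_A − (X(f) ∘ h)_B`, for `f : A ⟶ B` in `C` and `h ∈ Hom_k(Y(B), X(A))`. -/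
def homRel : Submodule k (HomSum k C X Y) :=
  Submodule.span k
    { v | ∃ (A B : C) (f : A ⟶ B) (h : Y.obj B →ₗ[k] X.obj A),
        v = DirectSum.lof k C (fun c => Y.obj c →ₗ[k] X.obj c) A
              (h ∘ₗ ((Y.map f).hom : Y.obj A →ₗ[k] Y.obj B)) -
            DirectSum.lof k C (fun c => Y.obj c →ₗ[k] X.obj c) B
              (((X.map f).hom : X.obj A →ₗ[k] X.obj B) ∘ₗ h) }

/-- The coend `Hom̌(X,Y)`, realized as the quotient of `⊕_{C} Hom_k(Y(C), X(C))` by the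
dinaturality relations. -/
def HomCheck := HomSum k C X Y ⧸ homRel k C X Y

instance : AddCommGroup (HomCheck k C X Y) :=
  inferInstanceAs (AddCommGroup (HomSum k C X Y ⧸ homRel k C X Y))

instance : Module k (HomCheck k C X Y) :=
  inferInstanceAs (Module k (HomSum k C X Y ⧸ homRel k C X Y))

/-- The canonical map `Hom_k(Y(C), X(C)) → Hom̌(X,Y)`, `h ↦ [h]`. -/
def homMk (c : C) : (Y.obj c →ₗ[k] X.obj c) →ₗ[k] HomCheck k C X Y :=
  (homRel k C X Y).mkQ ∘ₗ DirectSum.lof k C (fun c => Y.obj c →ₗ[k] X.obj c) c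

section TracePairing

variable {k : Type u} [Field k] {V W : Type u}
  [AddCommGroup V] [Module k V] [AddCommGroup W] [Module k W]
  [FiniteDimensional k V] [FiniteDimensional k W]

lemma trace_smulRight_dual (f : Module.Dual k W) (x : W) :
    LinearMap.trace k W (f.smulRight x) = f x := by
  have h1 : f.smulRight x = (LinearMap.toSpanSingleton k W x) ∘ₗ f := by
    ext w; simp [LinearMap.toSpanSingleton]
  have h2 : f ∘ₗ LinearMap.toSpanSingleton k W x = f x • LinearMap.id := by
    ext c; simp [LinearMap.toSpanSingleton, mul_comm]
  rw [h1, LinearMap.trace_comp_comm', h2, map_smul, LinearMap.trace_id]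
  simp

lemma trace_pair_inj (u : V →ₗ[k] W)
    (hu : ∀ h : W →ₗ[k] V, LinearMap.trace k W (u ∘ₗ h) = 0) : u = 0 := by
  ext x
  rw [LinearMap.zero_apply, ← Module.forall_dual_apply_eq_zero_iff k]
  intro f
  have h2 : u ∘ₗ f.smulRight x = f.smulRight (u x) := by ext; simp
  have := hu (f.smulRight x)
  rwa [h2, trace_smulRight_dual] at this

variable (k V W) in
/-- The trace pairing as a map `Hom(V,W) → Hom(W,V)*`. -/
def tracePairing : (V →ₗ[k] W) →ₗ[k] Module.Dual k (W →ₗ[k] V) :=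
  (LinearMap.llcomp k (W →ₗ[k] V) (W →ₗ[k] W) k (LinearMap.trace k W)).comp
    (LinearMap.llcomp k W V W)

@[simp] lemma tracePairing_apply (u : V →ₗ[k] W) (h : W →ₗ[k] V) :
    tracePairing k V W u h = LinearMap.trace k W (u ∘ₗ h) := rfl

lemma tracePairing_bijective : Function.Bijective (tracePairing k V W) := by
  have hinj : Function.Injective (tracePairing k V W) := by
    rw [← LinearMap.ker_eq_bot, eq_bot_iff]
    intro u hu
    simp only [LinearMap.mem_ker] at hu
    have : u = 0 := trace_pair_inj u fun h => by
      simpa using LinearMap.congr_fun hu h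
    simpa [this] using Submodule.zero_mem _
  refine ⟨hinj, ?_⟩
  rw [← LinearMap.injective_iff_surjective_of_finrank_eq_finrank ?_]
  · exact hinj
  · rw [Subspace.dual_finrank_eq, Module.finrank_linearMap, Module.finrank_linearMap,
      mul_comm]

end TracePairing

section Main

variable {k C X Y}

lemma homMk_dinat (A B : C) (f : A ⟶ B) (h : Y.obj B →ₗ[k] X.obj A) :
    homMk k C X Y A (h ∘ₗ ((Y.map f).hom : Y.obj A →ₗ[k] Y.obj B)) =
      homMk k C X Y B (((X.map f).hom : X.obj A →ₗ[k] X.obj B) ∘ₗ h) := by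
  have hmem :
      DirectSum.lof k C (fun c => Y.obj c →ₗ[k] X.obj c) A
          (h ∘ₗ ((Y.map f).hom : Y.obj A →ₗ[k] Y.obj B)) -
        DirectSum.lof k C (fun c => Y.obj c →ₗ[k] X.obj c) B
          (((X.map f).hom : X.obj A →ₗ[k] X.obj B) ∘ₗ h) ∈ homRel k C X Y :=
    Submodule.subset_span ⟨A, B, f, h, rfl⟩
  simp only [homMk, LinearMap.comp_apply, Submodule.mkQ_apply]
  exact (Submodule.Quotient.eq _).mpr hmem

/-- Extensionality for maps out of `HomCheck`. -/
lemma homCheck_hom_ext {W : Type u} [AddCommGroup W] [Module k W]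
    {φ ψ : HomCheck k C X Y →ₗ[k] W}
    (H : ∀ (c : C) (h : Y.obj c →ₗ[k] X.obj c),
      φ (homMk k C X Y c h) = ψ (homMk k C X Y c h)) : φ = ψ := by
  have h1 : φ ∘ₗ (homRel k C X Y).mkQ = ψ ∘ₗ (homRel k C X Y).mkQ :=
    DirectSum.linearMap_ext _ fun c => LinearMap.ext fun h => H c h
  ext x
  obtain ⟨y, rfl⟩ := Submodule.mkQ_surjective (homRel k C X Y) x
  exact LinearMap.congr_fun h1 y

variable [∀ c : C, FiniteDimensional k (X.obj c)] [∀ c : C, FiniteDimensional k (Y.obj c)]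

lemma end_trace_eq (u : ∀ c : C, X.obj c →ₗ[k] Y.obj c) (hu : u ∈ homEnd k C X Y)
    (A B : C) (f : A ⟶ B) (h : Y.obj B →ₗ[k] X.obj A) :
    LinearMap.trace k (Y.obj A) (u A ∘ₗ (h ∘ₗ ((Y.map f).hom : Y.obj A →ₗ[k] Y.obj B))) =
      LinearMap.trace k (Y.obj B) (u B ∘ₗ (((X.map f).hom : X.obj A →ₗ[k] X.obj B) ∘ₗ h)) := by
  have hcomm : ((Y.map f).hom : Y.obj A →ₗ[k] Y.obj B) ∘ₗ u A =
      u B ∘ₗ ((X.map f).hom : X.obj A →ₗ[k] X.obj B) := LinearMap.ext fun x => hu A B f x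
  calc LinearMap.trace k (Y.obj A) (u A ∘ₗ (h ∘ₗ ((Y.map f).hom : Y.obj A →ₗ[k] Y.obj B)))
      = LinearMap.trace k (Y.obj A) ((u A ∘ₗ h) ∘ₗ ((Y.map f).hom : Y.obj A →ₗ[k] Y.obj B)) := by
        rw [LinearMap.comp_assoc]
    _ = LinearMap.trace k (Y.obj B)
          (((Y.map f).hom : Y.obj A →ₗ[k] Y.obj B) ∘ₗ (u A ∘ₗ h)) := by
        rw [LinearMap.trace_comp_comm']
    _ = LinearMap.trace k (Y.obj B) (u B ∘ₗ (((X.map f).hom : X.obj A →ₗ[k] X.obj B) ∘ₗ h)) := by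
        rw [← LinearMap.comp_assoc, hcomm, LinearMap.comp_assoc]

/-- The trace-pairing functional `Hom̌(X,Y) → k` associated to an element of the end. -/
def Efun (u : homEnd k C X Y) : Module.Dual k (HomCheck k C X Y) :=
  Submodule.liftQ (homRel k C X Y)
    (DirectSum.toModule k C k fun c => tracePairing k (X.obj c) (Y.obj c) (u.1 c))
    (by
      rw [homRel, Submodule.span_le]
      rintro v ⟨A, B, f, h, rfl⟩
      simp only [SetLike.mem_coe, LinearMap.mem_ker, map_sub, DirectSum.toModule_lof,
        tracePairing_apply, sub_eq_zero]
      exact end_trace_eq u.1 u.2 A B f h)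

lemma Efun_apply (u : homEnd k C X Y) (c : C) (h : Y.obj c →ₗ[k] X.obj c) :
    Efun u (homMk k C X Y c h) = LinearMap.trace k (Y.obj c) (u.1 c ∘ₗ h) := by
  show (DirectSum.toModule k C k fun c => tracePairing k (X.obj c) (Y.obj c) (u.1 c))
      (DirectSum.lof k C (fun c => Y.obj c →ₗ[k] X.obj c) c h) = _
  simp

/-- The trace pairing as a linear map from the end to the dual of the coend. -/
def Emap : homEnd k C X Y →ₗ[k] Module.Dual k (HomCheck k C X Y) where
  toFun := Efun
  map_add' u v := homCheck_hom_ext fun c h => by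
    simp [Efun_apply, LinearMap.add_comp]
  map_smul' a u := homCheck_hom_ext fun c h => by
    simp [Efun_apply, LinearMap.smul_comp]

lemma Emap_bijective : Function.Bijective (Emap (k := k) (C := C) (X := X) (Y := Y)) := by
  constructor
  · rw [← LinearMap.ker_eq_bot, eq_bot_iff]
    intro u hu
    simp only [LinearMap.mem_ker] at hu
    have hz : ∀ c : C, u.1 c = 0 := by
      intro c
      refine trace_pair_inj _ fun h => ?_
      have := LinearMap.congr_fun (congrArg (LinearMap.comp · (homMk k C X Y c)) hu) h
      simpa [Emap, Efun_apply] using this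
    have : u = 0 := Subtype.ext (funext hz)
    simpa [this] using Submodule.zero_mem _
  · intro φ
    set Teq : ∀ c : C, (X.obj c →ₗ[k] Y.obj c) ≃ₗ[k]
        Module.Dual k (Y.obj c →ₗ[k] X.obj c) :=
      fun c => LinearEquiv.ofBijective _ (tracePairing_bijective (k := k)
        (V := X.obj c) (W := Y.obj c)) with hTeq
    set u : ∀ c : C, X.obj c →ₗ[k] Y.obj c :=
      fun c => (Teq c).symm (φ ∘ₗ homMk k C X Y c) with hudef
    have hpair : ∀ (c : C) (h : Y.obj c →ₗ[k] X.obj c),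
        LinearMap.trace k (Y.obj c) (u c ∘ₗ h) = φ (homMk k C X Y c h) := by
      intro c h
      have : tracePairing k (X.obj c) (Y.obj c) (u c) = φ ∘ₗ homMk k C X Y c := by
        simpa [hudef, hTeq] using (Teq c).apply_symm_apply (φ ∘ₗ homMk k C X Y c)
      simpa using LinearMap.congr_fun this h
    have hmem : u ∈ homEnd k C X Y := by
      intro A B f x
      have key : ((Y.map f).hom : Y.obj A →ₗ[k] Y.obj B) ∘ₗ u A =
          u B ∘ₗ ((X.map f).hom : X.obj A →ₗ[k] X.obj B) := by
        rw [← sub_eq_zero]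
        refine trace_pair_inj _ fun h => ?_
        have h1 : LinearMap.trace k (Y.obj B)
            ((((Y.map f).hom : Y.obj A →ₗ[k] Y.obj B) ∘ₗ u A) ∘ₗ h) =
            LinearMap.trace k (Y.obj A) (u A ∘ₗ (h ∘ₗ ((Y.map f).hom : Y.obj A →ₗ[k] Y.obj B))) := by
          rw [LinearMap.comp_assoc, LinearMap.trace_comp_comm', LinearMap.comp_assoc]
        rw [LinearMap.sub_comp, map_sub, h1, LinearMap.comp_assoc, hpair, hpair,
          homMk_dinat, sub_self]
      exact LinearMap.congr_fun key x
    refine ⟨⟨u, hmem⟩, ?_⟩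
    exact homCheck_hom_ext fun c h => by
      simpa [Emap, Efun_apply] using hpair c h

end Main

/-- Tannaka: for `X, Y : C ⥤ Vect_k` with finite-dimensional values, the bifunctor
`(A, B) ↦ Hom_k(X(A), Y(B))` has a coend `Hom̌(X,Y)` (the canonical maps `h ↦ [h]` form a
universal cowedge), and the linear dual `Hom̌(X,Y)*` is isomorphic to the end `Hom(X,Y)`
(the space of families `u = {u_C}` with `Y(f) ∘ u_A = u_B ∘ X(f)`); the isomorphism is
induced by the pairing `⟨u, [h]⟩ = Tr(u_C ∘ h)` for `h ∈ Hom_k(Y(C), X(C))`. -/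
theorem homCheck_dual_iso_homEnd
    [∀ c : C, FiniteDimensional k (X.obj c)] [∀ c : C, FiniteDimensional k (Y.obj c)] :
    -- the canonical maps form a cowedge (dinaturality)
    (∀ (A B : C) (f : A ⟶ B) (h : Y.obj B →ₗ[k] X.obj A),
      homMk k C X Y A (h ∘ₗ ((Y.map f).hom : Y.obj A →ₗ[k] Y.obj B)) =
        homMk k C X Y B (((X.map f).hom : X.obj A →ₗ[k] X.obj B) ∘ₗ h)) ∧
    -- universality: every cowedge factors uniquely through `Hom̌(X,Y)`
    (∀ (W : Type u) [AddCommGroup W] [Module k W]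
      (w : ∀ c : C, (Y.obj c →ₗ[k] X.obj c) →ₗ[k] W),
      (∀ (A B : C) (f : A ⟶ B) (h : Y.obj B →ₗ[k] X.obj A),
        w A (h ∘ₗ ((Y.map f).hom : Y.obj A →ₗ[k] Y.obj B)) =
          w B (((X.map f).hom : X.obj A →ₗ[k] X.obj B) ∘ₗ h)) →
      ∃! φ : HomCheck k C X Y →ₗ[k] W, ∀ c : C, φ ∘ₗ homMk k C X Y c = w c) ∧
    -- the end is isomorphic to the dual of the coend, via the trace pairing
    (∃ e : homEnd k C X Y ≃ₗ[k] Module.Dual k (HomCheck k C X Y),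
      ∀ (u : homEnd k C X Y) (c : C) (h : Y.obj c →ₗ[k] X.obj c),
        e u (homMk k C X Y c h) = LinearMap.trace k (Y.obj c) (u.1 c ∘ₗ h)) := by
  refine ⟨fun A B f h => homMk_dinat A B f h, ?_, ?_⟩
  · intro W _ _ w hw
    have hker : homRel k C X Y ≤ LinearMap.ker (DirectSum.toModule k C W w) := by
      rw [homRel, Submodule.span_le]
      rintro v ⟨A, B, f, h, rfl⟩
      simp only [SetLike.mem_coe, LinearMap.mem_ker, map_sub, DirectSum.toModule_lof,
        sub_eq_zero]
      exact hw A B f h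
    refine ⟨Submodule.liftQ _ _ hker, fun c => ?_, fun φ hφ => ?_⟩
    · ext h
      show (DirectSum.toModule k C W w)
          (DirectSum.lof k C (fun c => Y.obj c →ₗ[k] X.obj c) c h) = _
      simp
    · refine homCheck_hom_ext fun c h => ?_
      have h1 := LinearMap.congr_fun (hφ c) h
      simp only [LinearMap.comp_apply] at h1
      rw [h1]
      show _ = (DirectSum.toModule k C W w)
          (DirectSum.lof k C (fun c => Y.obj c →ₗ[k] X.obj c) c h)
      simp
  · refine ⟨LinearEquiv.ofBijective Emap Emap_bijective, fun u c h => ?_⟩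
    rw [LinearEquiv.ofBijective_apply]
    exact Efun_apply u c h

end
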